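/- Let c₀, c₁, c₂ > 0 with c₁ ≤ c₂. Let ν, τ₁ : ℝ → ℝ satisfy c₁ ≤ ν(e) ≤ c₂ and 0 ≤ τ₁(e) ≤ c₀ for all e. Suppose S, D ∈ ℝ^{3×3} and e ∈ ℝ satisfy S = 2ν(e) · ((|D| − τ₁(e))⁺/|D|) · D (with S = 0 if D = 0). Then there exist α, β > 0 depending only on c₀, c₁, c₂ such that S · D ≥ α(|S|² + |D|²) − β. -/

import Mathlib

/-- Frobenius inner product on 3×3 real matrices. -/
noncomputable def Mdot (A B : Matrix (Fin 3) (Fin 3) ℝ) : ℝ := ∑ i, ∑ j, A i j * B i j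

/-- Frobenius norm. -/
noncomputable def Mnorm (A : Matrix (Fin 3) (Fin 3) ℝ) : ℝ := Real.sqrt (Mdot A A)

/-- Truncation map ((|A| − τ)⁺/|A|)·A, with value 0 at A = 0. -/
noncomputable def trunc (τ : ℝ) (A : Matrix (Fin 3) (Fin 3) ℝ) : Matrix (Fin 3) (Fin 3) ℝ :=
  if A = 0 then 0 else (max (Mnorm A - τ) 0 / Mnorm A) • A

lemma Mdot_smul (c : ℝ) (A B : Matrix (Fin 3) (Fin 3) ℝ) :
    Mdot (c • A) B = c * Mdot A B := by
  simp [Mdot, Finset.mul_sum, mul_assoc]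

lemma Mdot_self_nonneg (A : Matrix (Fin 3) (Fin 3) ℝ) : 0 ≤ Mdot A A := by
  apply Finset.sum_nonneg; intro i _
  apply Finset.sum_nonneg; intro j _
  exact mul_self_nonneg _

lemma Mnorm_nonneg (A : Matrix (Fin 3) (Fin 3) ℝ) : 0 ≤ Mnorm A := Real.sqrt_nonneg _

lemma Mnorm_sq (A : Matrix (Fin 3) (Fin 3) ℝ) : Mnorm A ^ 2 = Mdot A A :=
  Real.sq_sqrt (Mdot_self_nonneg A)

lemma Mdot_self_pos {A : Matrix (Fin 3) (Fin 3) ℝ} (hA : A ≠ 0) : 0 < Mdot A A := by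
  obtain ⟨i, j, hij⟩ : ∃ i j, A i j ≠ 0 := by
    by_contra h
    push_neg at h
    exact hA (by ext i j; simp [h])
  have h1 : 0 < A i j * A i j := mul_self_pos.mpr hij
  have h2 : A i j * A i j ≤ ∑ j', A i j' * A i j' := by
    apply Finset.single_le_sum (fun k _ => mul_self_nonneg (A i k)) (Finset.mem_univ j)
  have h3 : ∑ j', A i j' * A i j' ≤ Mdot A A := by
    apply Finset.single_le_sum (f := fun k => ∑ j', A k j' * A k j')
      (fun k _ => Finset.sum_nonneg fun l _ => mul_self_nonneg (A k l)) (Finset.mem_univ i)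
  linarith

lemma Mnorm_pos {A : Matrix (Fin 3) (Fin 3) ℝ} (hA : A ≠ 0) : 0 < Mnorm A :=
  Real.sqrt_pos.mpr (Mdot_self_pos hA)

lemma Mdot_smul_right (c : ℝ) (A B : Matrix (Fin 3) (Fin 3) ℝ) :
    Mdot A (c • B) = c * Mdot A B := by
  simp only [Mdot, Matrix.smul_apply, smul_eq_mul, Finset.mul_sum]
  congr 1; ext i; congr 1; ext j; ring

lemma Mnorm_smul (c : ℝ) (A : Matrix (Fin 3) (Fin 3) ℝ) :
    Mnorm (c • A) = |c| * Mnorm A := by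
  unfold Mnorm
  rw [Mdot_smul, Mdot_smul_right, ← mul_assoc, show c * c = c ^ 2 by ring,
    Real.sqrt_mul (sq_nonneg c), Real.sqrt_sq_eq_abs]

theorem stmt3 (c₀ c₁ c₂ : ℝ) (hc₀ : 0 < c₀) (hc₁ : 0 < c₁) (hc₂ : 0 < c₂) (h12 : c₁ ≤ c₂)
    (ν τ₁ : ℝ → ℝ)
    (hν : ∀ e, c₁ ≤ ν e ∧ ν e ≤ c₂) (hτ : ∀ e, 0 ≤ τ₁ e ∧ τ₁ e ≤ c₀) :
    ∃ α > (0:ℝ), ∃ β > (0:ℝ), ∀ (S D : Matrix (Fin 3) (Fin 3) ℝ) (e : ℝ),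
      S = (2 * ν e) • trunc (τ₁ e) D →
      Mdot S D ≥ α * (Mnorm S ^ 2 + Mnorm D ^ 2) - β := by
  have hden : (0:ℝ) < 4 * c₂ ^ 2 + 1 := by positivity
  refine ⟨c₁ / (4 * c₂ ^ 2 + 1), by positivity, 4 * c₀ ^ 2 * c₁, by positivity, ?_⟩
  intro S D e hS
  set α := c₁ / (4 * c₂ ^ 2 + 1) with hα
  have hαpos : 0 < α := by positivity
  have hαval : α * (4 * c₂ ^ 2 + 1) = c₁ := by rw [hα]; field_simp
  clear_value α
  obtain ⟨hν1, hν2⟩ := hν e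
  obtain ⟨hτ1, hτ2⟩ := hτ e
  have hνnn : (0:ℝ) ≤ ν e := by linarith
  by_cases hD : D = 0
  · subst hD
    have hS0 : S = 0 := by simpa [trunc] using hS
    subst hS0
    have h0 : Mdot (0 : Matrix (Fin 3) (Fin 3) ℝ) 0 = 0 := by simp [Mdot]
    have h0' : Mnorm (0 : Matrix (Fin 3) (Fin 3) ℝ) = 0 := by simp [Mnorm, h0]
    rw [h0, h0']
    nlinarith
  · have hdpos : 0 < Mnorm D := Mnorm_pos hD
    set d := Mnorm D with hd
    set m := max (d - τ₁ e) 0 with hm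
    have hm0 : 0 ≤ m := le_max_right _ _
    have hmd : m ≤ d := max_le (by linarith) (le_of_lt hdpos)
    have hmlb : d - c₀ ≤ m := le_trans (by linarith) (le_max_left (d - τ₁ e) 0)
    have hSform : S = (2 * ν e * (m / d)) • D := by
      rw [hS, trunc, if_neg hD, smul_smul]
    have hcoef : 0 ≤ 2 * ν e * (m / d) :=
      mul_nonneg (by linarith) (div_nonneg hm0 hdpos.le)
    have hMdotSD : Mdot S D = 2 * ν e * (m / d) * Mdot D D := by
      rw [hSform, Mdot_smul]
    have hDD : Mdot D D = d ^ 2 := (Mnorm_sq D).symm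
    have hMnormS : Mnorm S = 2 * ν e * m := by
      rw [hSform, Mnorm_smul, abs_of_nonneg hcoef, ← hd]
      field_simp
    rw [hMdotSD, hDD, hMnormS]
    have hkey : 2 * ν e * (m / d) * d ^ 2 = 2 * ν e * m * d := by
      field_simp
    rw [hkey]
    clear_value d m
    clear hS hSform hMdotSD hDD hMnormS hkey hcoef hm hd
    rcases le_or_gt d (2 * c₀) with hcase | hcase
    · have h1 : 0 ≤ 2 * ν e * m * d :=
        mul_nonneg (mul_nonneg (by linarith) hm0) (by linarith)
      have hm2c : m ≤ 2 * c₀ := hmd.trans hcase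
      have hp : ν e * m ≤ c₂ * (2 * c₀) := mul_le_mul hν2 hm2c hm0 hc₂.le
      have h2 : (2 * ν e * m) ^ 2 ≤ 4 * (c₂ * (2 * c₀)) ^ 2 := by
        nlinarith [mul_self_le_mul_self (mul_nonneg hνnn hm0) hp]
      have hd2 : d ^ 2 ≤ 4 * c₀ ^ 2 := by nlinarith
      have hsum : (2 * ν e * m) ^ 2 + d ^ 2 ≤ (4 * c₂ ^ 2 + 1) * (4 * c₀ ^ 2) := by nlinarith
      have hub : α * ((2 * ν e * m) ^ 2 + d ^ 2) ≤ α * ((4 * c₂ ^ 2 + 1) * (4 * c₀ ^ 2)) :=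
        mul_le_mul_of_nonneg_left hsum hαpos.le
      have heq : α * ((4 * c₂ ^ 2 + 1) * (4 * c₀ ^ 2)) = 4 * c₀ ^ 2 * c₁ := by
        rw [← mul_assoc, hαval]; ring
      linarith
    · have hmhalf : d / 2 ≤ m := by linarith
      have h3 : c₁ * (d / 2) ≤ ν e * m := mul_le_mul hν1 hmhalf (by linarith) hνnn
      have hLB : c₁ * d ^ 2 ≤ 2 * ν e * m * d := by
        nlinarith [mul_le_mul_of_nonneg_left h3 (by linarith : (0:ℝ) ≤ 2 * d)]
      have h4 : ν e * m ≤ c₂ * d := mul_le_mul hν2 hmd hm0 hc₂.le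
      have hsum : (2 * ν e * m) ^ 2 + d ^ 2 ≤ (4 * c₂ ^ 2 + 1) * d ^ 2 := by
        nlinarith [mul_self_le_mul_self (mul_nonneg hνnn hm0) h4]
      have hub : α * ((2 * ν e * m) ^ 2 + d ^ 2) ≤ α * ((4 * c₂ ^ 2 + 1) * d ^ 2) :=
        mul_le_mul_of_nonneg_left hsum hαpos.le
      have heq : α * ((4 * c₂ ^ 2 + 1) * d ^ 2) = c₁ * d ^ 2 := by
        rw [← mul_assoc, hαval]
      nlinarith [sq_nonneg c₀, mul_pos hc₀ hc₁]
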